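/- Let n ≥ 4, m ≥ 0, and for β > 0 define the thermal energy density E(β) = β^{−n} B_{n,2}(βm) and the thermal Wick square W(β) = β^{2−n} B_{n,0}(βm), with B_{n,k} as above. Then β^n E(β) → B_{n,2}(0) > 0 and β^n W(β) = β² B_{n,0}(βm) → 0 as β → 0⁺. Consequently, there are no constants c, c' ≥ 0 with E(β) ≤ c + c'(Q_A + W(β)·Q_B) for all β > 0, for any fixed constants Q_A, Q_B ≥ 0. -/

import Mathlib

open MeasureTheory Real Filter Set

namespace ThermalAux

lemma exp_lb {z : ℝ} (hz : 0 < z) : z * Real.exp (z/2) ≤ Real.exp z - 1 := by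
  have ha : Real.exp (z/2) * Real.exp (-(z/2)) = 1 := by
    rw [← Real.exp_add]; simp
  have hz2 : Real.exp (z/2) * Real.exp (z/2) = Real.exp z := by
    rw [← Real.exp_add]; ring_nf
  have hs : z ≤ Real.exp (z/2) - Real.exp (-(z/2)) := by
    have h := Real.self_le_sinh_iff.mpr (by linarith : (0:ℝ) ≤ z/2)
    rw [Real.sinh_eq] at h; linarith
  nlinarith [Real.exp_pos (z/2), mul_le_mul_of_nonneg_left hs (Real.exp_pos (z/2)).le]

variable (n k : ℕ)

noncomputable def f (α z : ℝ) : ℝ :=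
  (z ^ 2 - α ^ 2) ^ (((n : ℝ) - 3) / 2) * z ^ k / (Real.exp z - 1)

noncomputable def g (z : ℝ) : ℝ := z ^ ((n : ℝ) + k - 4) * Real.exp (-(1/2) * z)

lemma hpnn (hn : 4 ≤ n) : (0:ℝ) ≤ ((n : ℝ) - 3) / 2 := by
  have : (4:ℝ) ≤ n := by exact_mod_cast hn
  linarith

lemma exp_sub_one_pos {z : ℝ} (hz : 0 < z) : 0 < Real.exp z - 1 := by
  have h := Real.exp_lt_exp.mpr hz; rw [Real.exp_zero] at h; linarith

lemma g_integrable (hn : 4 ≤ n) : IntegrableOn (g n k) (Ioi 0) := by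
  have : IntegrableOn (fun x : ℝ => x ^ ((n:ℝ) + k - 4) * Real.exp (-(1/2) * x ^ (1:ℝ))) (Ioi 0) :=
    integrableOn_rpow_mul_exp_neg_mul_rpow
      (by have : (4:ℝ) ≤ n := by exact_mod_cast hn
          have : (0:ℝ) ≤ k := Nat.cast_nonneg k
          linarith) (by norm_num) (by norm_num)
  refine this.congr_fun (fun x hx => ?_) measurableSet_Ioi
  simp [g, Real.rpow_one]

lemma f_cont (hn : 4 ≤ n) (α : ℝ) : Measurable (f n k α) := by
  apply Measurable.div
  · exact (((Real.continuous_rpow_const (hpnn n hn)).comp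
      ((continuous_pow 2).sub continuous_const)).mul (continuous_pow k)).measurable
  · exact (Real.continuous_exp.sub continuous_const).measurable

lemma f_nonneg {α z : ℝ} (hz : 0 < z) (hαz : α ≤ z) (hα : 0 ≤ α) : 0 ≤ f n k α z := by
  have h1 : 0 ≤ z ^ 2 - α ^ 2 := by nlinarith
  exact div_nonneg (mul_nonneg (Real.rpow_nonneg h1 _) (pow_nonneg hz.le _))
    (exp_sub_one_pos hz).le

lemma f_bound (hn : 4 ≤ n) {α z : ℝ} (hz : 0 < z) (hα : 0 ≤ α) :
    ‖(Ioi α).indicator (f n k α) z‖ ≤ g n k z := by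
  have hgnn : 0 ≤ g n k z :=
    mul_nonneg (Real.rpow_nonneg hz.le _) (Real.exp_pos _).le
  by_cases hmem : z ∈ Ioi α
  · rw [indicator_of_mem hmem]
    have hαz : α < z := hmem
    rw [Real.norm_eq_abs, abs_of_nonneg (f_nonneg n k hz hαz.le hα)]
    have hexp := exp_sub_one_pos hz
    have hlb : z * Real.exp (z/2) ≤ Real.exp z - 1 := exp_lb hz
    have h1 : (z ^ 2 - α ^ 2) ^ (((n : ℝ) - 3) / 2) ≤ z ^ ((n:ℝ) - 3) := by
      calc (z ^ 2 - α ^ 2) ^ (((n : ℝ) - 3) / 2) ≤ (z ^ 2) ^ (((n : ℝ) - 3) / 2) :=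
            Real.rpow_le_rpow (by nlinarith) (by nlinarith) (hpnn n hn)
        _ = z ^ ((n:ℝ) - 3) := by
            rw [← Real.rpow_natCast z 2, ← Real.rpow_mul hz.le]
            congr 1
            push_cast
            ring
    have h2 : f n k α z ≤ z ^ ((n:ℝ) - 3) * z ^ k / (Real.exp z - 1) := by
      apply (div_le_div_iff_of_pos_right hexp).mpr
      exact mul_le_mul_of_nonneg_right h1 (pow_nonneg hz.le _)
    refine h2.trans ?_
    have h3 : z ^ ((n:ℝ) - 3) * z ^ k / (Real.exp z - 1)
        ≤ z ^ ((n:ℝ) - 3) * z ^ k / (z * Real.exp (z/2)) := by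
      apply div_le_div_of_nonneg_left _ (by positivity) hlb
      exact mul_nonneg (Real.rpow_nonneg hz.le _) (pow_nonneg hz.le _)
    refine h3.trans_eq ?_
    rw [← Real.rpow_natCast z k, ← Real.rpow_add hz, g,
      show (n:ℝ) + k - 4 = ((n:ℝ) - 3 + k) - 1 by ring, Real.rpow_sub hz, Real.rpow_one,
      show -(1/2) * z = -(z/2) by ring, Real.exp_neg, ← div_div, div_eq_mul_inv (_ / z)]
  · rw [indicator_of_notMem hmem]
    simpa using hgnn

lemma integral_eq (α : ℝ) (hα : 0 ≤ α) :
    ∫ z in Ioi α, f n k α z = ∫ z in Ioi (0:ℝ), (Ioi α).indicator (f n k α) z := by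
  rw [integral_indicator measurableSet_Ioi, Measure.restrict_restrict measurableSet_Ioi,
    Ioi_inter_Ioi, max_eq_left hα]

lemma tendsto_B_aux (hn : 4 ≤ n) :
    Tendsto (fun α : ℝ => ∫ z in Ioi α, f n k α z) (nhdsWithin (0:ℝ) (Ici 0))
      (nhds (∫ z in Ioi (0:ℝ), f n k 0 z)) := by
  have hmem : ∀ᶠ α in nhdsWithin (0:ℝ) (Ici 0), α ∈ Ici (0:ℝ) := self_mem_nhdsWithin
  have key : Tendsto (fun α : ℝ => ∫ z in Ioi (0:ℝ), (Ioi α).indicator (f n k α) z)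
      (nhdsWithin (0:ℝ) (Ici 0)) (nhds (∫ z in Ioi (0:ℝ), f n k 0 z)) := by
    apply tendsto_integral_filter_of_dominated_convergence (g n k)
    · filter_upwards with α
      exact ((f_cont n k hn α).indicator measurableSet_Ioi).aestronglyMeasurable
    · filter_upwards [hmem] with α hα
      rw [ae_restrict_iff' measurableSet_Ioi]
      filter_upwards with z hz
      exact f_bound n k hn hz hα
    · exact g_integrable n k hn
    · rw [ae_restrict_iff' measurableSet_Ioi]
      filter_upwards with z hz
      have hev : (fun α : ℝ => f n k α z) =ᶠ[nhdsWithin (0:ℝ) (Ici 0)]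
          (fun α => (Ioi α).indicator (f n k α) z) := by
        have : Iio z ∈ nhdsWithin (0:ℝ) (Ici 0) := nhdsWithin_le_nhds (Iio_mem_nhds hz)
        filter_upwards [this] with α hα
        exact (indicator_of_mem (mem_Ioi.mpr hα) _).symm
      apply Tendsto.congr' hev
      have hcont : ContinuousAt (fun α : ℝ => f n k α z) 0 := by
        apply ContinuousAt.div
        · apply ContinuousAt.mul ?_ continuousAt_const
          exact ((Real.continuous_rpow_const (hpnn n hn)).comp
            (continuous_const.sub (continuous_pow 2))).continuousAt
        · exact continuousAt_const
        · exact (exp_sub_one_pos hz).ne'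
      exact hcont.tendsto.mono_left nhdsWithin_le_nhds
  apply key.congr'
  filter_upwards [hmem] with α hα
  exact (integral_eq n k α hα).symm

lemma f_integrableOn (hn : 4 ≤ n) : IntegrableOn (f n k 0) (Ioi 0) := by
  apply Integrable.mono' (g_integrable n k hn) (f_cont n k hn 0).aestronglyMeasurable
  rw [ae_restrict_iff' measurableSet_Ioi]
  filter_upwards with z hz
  have := f_bound n k hn hz le_rfl
  rwa [indicator_of_mem hz] at this

lemma f_pos {z : ℝ} (hz : 0 < z) : 0 < f n k 0 z := by
  have : (0:ℝ) < z ^ 2 - 0 ^ 2 := by nlinarith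
  exact div_pos (mul_pos (Real.rpow_pos_of_pos this _) (pow_pos hz _)) (exp_sub_one_pos hz)

lemma B_pos (hn : 4 ≤ n) : 0 < ∫ z in Ioi (0:ℝ), f n k 0 z := by
  have hnn : (0 : ℝ → ℝ) ≤ᶠ[ae (volume.restrict (Ioi 0))] f n k 0 := by
    refine (ae_restrict_iff' measurableSet_Ioi).mpr ?_
    filter_upwards with z hz
    exact (f_pos n k hz).le
  rw [setIntegral_pos_iff_support_of_nonneg_ae hnn (f_integrableOn n k hn)]
  have hsub : Ioi (0:ℝ) ⊆ Function.support (f n k 0) ∩ Ioi 0 := fun z hz =>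
    ⟨ne_of_gt (f_pos n k hz), hz⟩
  calc (0 : ENNReal) < volume (Ioi (0:ℝ)) := by rw [Real.volume_Ioi]; exact ENNReal.zero_lt_top
    _ ≤ _ := measure_mono hsub

end ThermalAux
open ThermalAux in
theorem thermal_nontriviality (n : ℕ) (hn : 4 ≤ n) (m : ℝ) (hm : 0 ≤ m)
    (B : ℕ → ℝ → ℝ)
    (hB : ∀ (k : ℕ) (α : ℝ), B k α = ∫ z in Set.Ioi α,
        (z ^ 2 - α ^ 2) ^ (((n : ℝ) - 3) / 2) * z ^ k / (Real.exp z - 1))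
    (E W : ℝ → ℝ)
    (hE : ∀ β : ℝ, E β = B 2 (β * m) / β ^ n)
    (hW : ∀ β : ℝ, W β = β ^ 2 * B 0 (β * m) / β ^ n) :
    Tendsto (fun β : ℝ => β ^ n * E β) (nhdsWithin 0 (Set.Ioi 0)) (nhds (B 2 0)) ∧
    0 < B 2 0 ∧
    Tendsto (fun β : ℝ => β ^ n * W β) (nhdsWithin 0 (Set.Ioi 0)) (nhds 0) ∧
    ∀ QA QB : ℝ, 0 ≤ QA → 0 ≤ QB →
      ¬ ∃ c c' : ℝ, 0 ≤ c ∧ 0 ≤ c' ∧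
        ∀ β : ℝ, 0 < β → E β ≤ c + c' * (QA + W β * QB) := by
  have hp : ∀ (k : ℕ) (α : ℝ), B k α = ∫ z in Set.Ioi α, ThermalAux.f n k α z := by
    intro k α; rw [hB]; rfl
  have hmap : Tendsto (fun β : ℝ => β * m) (nhdsWithin 0 (Set.Ioi 0))
      (nhdsWithin 0 (Set.Ici 0)) := by
    rw [tendsto_nhdsWithin_iff]
    constructor
    · have : Tendsto (fun β : ℝ => β * m) (nhds 0) (nhds (0 * m)) :=
        (continuous_id.mul continuous_const).tendsto 0
      simpa using this.mono_left nhdsWithin_le_nhds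
    · filter_upwards [self_mem_nhdsWithin] with β hβ
      exact mul_nonneg (le_of_lt hβ) hm
  have keyk : ∀ k : ℕ, Tendsto (fun β : ℝ => B k (β * m)) (nhdsWithin 0 (Set.Ioi 0))
      (nhds (B k 0)) := by
    intro k
    simp only [hp]
    exact (tendsto_B_aux n k hn).comp hmap
  have h1 : Tendsto (fun β : ℝ => β ^ n * E β) (nhdsWithin 0 (Set.Ioi 0)) (nhds (B 2 0)) := by
    apply (keyk 2).congr'
    filter_upwards [self_mem_nhdsWithin] with β hβ
    rw [hE]
    have hβ0 : (β:ℝ) ≠ 0 := ne_of_gt hβ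
    field_simp
  have h2 : 0 < B 2 0 := by rw [hp]; exact B_pos n 2 hn
  have h3 : Tendsto (fun β : ℝ => β ^ n * W β) (nhdsWithin 0 (Set.Ioi 0)) (nhds 0) := by
    have hsq : Tendsto (fun β : ℝ => β ^ 2) (nhdsWithin 0 (Set.Ioi 0)) (nhds 0) := by
      have h := (continuous_pow 2).tendsto (0:ℝ)
      simpa using h.mono_left (nhdsWithin_le_nhds (s := Set.Ioi 0))
    have h3' := hsq.mul (keyk 0)
    rw [zero_mul] at h3'
    apply h3'.congr'
    filter_upwards [self_mem_nhdsWithin] with β hβ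
    rw [hW]
    have hβ0 : (β:ℝ) ≠ 0 := ne_of_gt hβ
    field_simp
  refine ⟨h1, h2, h3, ?_⟩
  rintro QA QB hQA hQB ⟨c, c', hc, hc', hle⟩
  have hpn : Tendsto (fun β : ℝ => β ^ n) (nhdsWithin 0 (Set.Ioi 0)) (nhds 0) := by
    have h := (continuous_pow n).tendsto (0:ℝ)
    simpa [zero_pow (by omega : n ≠ 0)] using h.mono_left (nhdsWithin_le_nhds (s := Set.Ioi 0))
  have hR : Tendsto (fun β : ℝ => (c + c' * QA) * β ^ n + c' * QB * (β ^ n * W β))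
      (nhdsWithin 0 (Set.Ioi 0)) (nhds 0) := by
    have := (hpn.const_mul (c + c' * QA)).add (h3.const_mul (c' * QB))
    simpa using this
  have hle' : ∀ᶠ β in nhdsWithin (0:ℝ) (Set.Ioi 0),
      β ^ n * E β ≤ (c + c' * QA) * β ^ n + c' * QB * (β ^ n * W β) := by
    filter_upwards [self_mem_nhdsWithin] with β hβ
    have h := hle β hβ
    have hb : (0:ℝ) ≤ β ^ n := pow_nonneg (le_of_lt hβ) n
    calc β ^ n * E β ≤ β ^ n * (c + c' * (QA + W β * QB)) :=
          mul_le_mul_of_nonneg_left h hb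
      _ = (c + c' * QA) * β ^ n + c' * QB * (β ^ n * W β) := by ring
  have := le_of_tendsto_of_tendsto h1 hR hle'
  linarith
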